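/- Let F be a strategyproof 2-facility mechanism on the line with approximation ratio at most ρ, and let x be an (i|j,k)-well-separated 3-agent instance with F_2(x) = x_j. Then for every x'_j with x_j < x'_j < x_k, the instance x' obtained by replacing x_j with x'_j satisfies F_2(x') = x'_j. -/
import Mathlib


noncomputable section

/-- Cost of an agent at location `a` under a pair of facilities. -/
def fcost (a : ℝ) (y : ℝ × ℝ) : ℝ := min |a - y.1| |a - y.2|

/-- Social cost: sum of the agents' distances to their nearest facility. -/
def scost {n : ℕ} (x : Fin n → ℝ) (y : ℝ × ℝ) : ℝ := ∑ i, fcost (x i) y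

/-- Optimal social cost over all placements of two facilities. -/
def optCost {n : ℕ} (x : Fin n → ℝ) : ℝ := ⨅ y : ℝ × ℝ, scost x y

/-- The mechanism outputs its facilities in increasing order. -/
def Ordered {n : ℕ} (F : (Fin n → ℝ) → ℝ × ℝ) : Prop := ∀ x, (F x).1 ≤ (F x).2

/-- No agent can strictly decrease her cost by misreporting her location. -/
def Strategyproof {n : ℕ} (F : (Fin n → ℝ) → ℝ × ℝ) : Prop :=
  ∀ (x : Fin n → ℝ) (i : Fin n) (y : ℝ),
    fcost (x i) (F x) ≤ fcost (x i) (F (Function.update x i y))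

/-- `F` has approximation ratio (at most) `ρ` for the social cost. -/
def ApproxRatio {n : ℕ} (F : (Fin n → ℝ) → ℝ × ℝ) (ρ : ℝ) : Prop :=
  ∀ x, scost x (F x) ≤ ρ * optCost x

/-- An `(i|j,k)`-well-separated 3-agent instance. -/
def WellSep (ρ : ℝ) (x : Fin 3 → ℝ) (i j k : Fin 3) : Prop :=
  x i < x j ∧ x j < x k ∧ ρ * (x k - x j) < x j - x i


lemma fcost_nonneg (a : ℝ) (y : ℝ × ℝ) : 0 ≤ fcost a y :=
  le_min (abs_nonneg _) (abs_nonneg _)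

lemma fcost_le_fst (a : ℝ) (y : ℝ × ℝ) : fcost a y ≤ |a - y.1| := min_le_left _ _
lemma fcost_le_snd (a : ℝ) (y : ℝ × ℝ) : fcost a y ≤ |a - y.2| := min_le_right _ _

lemma fcost_triangle (a b : ℝ) (y : ℝ × ℝ) : fcost a y ≤ |a - b| + fcost b y := by
  rcases le_total |b - y.1| |b - y.2| with h | h
  · calc fcost a y ≤ |a - y.1| := min_le_left _ _
      _ ≤ |a - b| + |b - y.1| := abs_sub_le a b y.1
      _ = |a - b| + fcost b y := by rw [fcost, min_eq_left h]
  · calc fcost a y ≤ |a - y.2| := min_le_right _ _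
      _ ≤ |a - b| + |b - y.2| := abs_sub_le a b y.2
      _ = |a - b| + fcost b y := by rw [fcost, min_eq_right h]

lemma scost_nonneg {n : ℕ} (x : Fin n → ℝ) (y : ℝ × ℝ) : 0 ≤ scost x y :=
  Finset.sum_nonneg fun _ _ => fcost_nonneg _ _

lemma optCost_nonneg {n : ℕ} (x : Fin n → ℝ) : 0 ≤ optCost x :=
  le_ciInf fun y => scost_nonneg x y

lemma optCost_le {n : ℕ} (x : Fin n → ℝ) (y : ℝ × ℝ) : optCost x ≤ scost x y :=
  ciInf_le ⟨0, by rintro c ⟨y, rfl⟩; exact scost_nonneg x y⟩ y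

lemma scost3 (x : Fin 3 → ℝ) (i j k : Fin 3) (hij : i ≠ j) (hik : i ≠ k) (hjk : j ≠ k)
    (y : ℝ × ℝ) : scost x y = fcost (x i) y + fcost (x j) y + fcost (x k) y := by
  have huniv : (Finset.univ : Finset (Fin 3)) = {i, j, k} := by
    symm
    apply Finset.eq_univ_of_card
    rw [Finset.card_insert_of_notMem (by simp [hij, hik]),
      Finset.card_insert_of_notMem (by simp [hjk]), Finset.card_singleton]
    rfl
  show (∑ l, fcost (x l) y) = _
  rw [huniv, Finset.sum_insert (by simp [hij, hik]), Finset.sum_insert (by simp [hjk]),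
    Finset.sum_singleton]
  ring

/-- SP core: agent j comparing reports t and s. -/
lemma SPcore (F : (Fin 3 → ℝ) → ℝ × ℝ) (hsp : Strategyproof F) (x : Fin 3 → ℝ) (j : Fin 3)
    (t s : ℝ) :
    fcost t (F (Function.update x j t)) ≤ fcost t (F (Function.update x j s)) := by
  have h := hsp (Function.update x j t) j s
  rwa [Function.update_self, Function.update_idem] at h

/-- F₂ is at least agent j's (new) location, via a coincidence argument with agent k. -/
lemma F2high (F : (Fin 3 → ℝ) → ℝ × ℝ) (ρ : ℝ) (hρ : 1 ≤ ρ)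
    (hord : Ordered F) (hsp : Strategyproof F) (happ : ApproxRatio F ρ)
    (x : Fin 3 → ℝ) (i j k : Fin 3) (hij : i ≠ j) (hik : i ≠ k) (hjk : j ≠ k)
    (t : ℝ) (hit : x i < t) (htk : t ≤ x k) :
    t ≤ (F (Function.update x j t)).2 := by
  have hρ0 : (0:ℝ) ≤ ρ := by linarith
  set w := Function.update (Function.update x j t) k t with hw
  have hwi : w i = x i := by
    rw [hw, Function.update_of_ne hik, Function.update_of_ne hij]
  have hwj : w j = t := by rw [hw, Function.update_of_ne hjk, Function.update_self]
  have hwk : w k = t := by rw [hw, Function.update_self]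
  have hopt : optCost w = 0 := by
    refine le_antisymm ?_ (optCost_nonneg w)
    refine le_trans (optCost_le w (x i, t)) ?_
    rw [scost3 w i j k hij hik hjk, hwi, hwj, hwk]
    have e1 : fcost (x i) (x i, t) = 0 := by
      show min |x i - x i| |x i - t| = 0
      rw [sub_self, abs_zero]; exact min_eq_left (abs_nonneg _)
    have e2 : fcost t (x i, t) = 0 := by
      show min |t - x i| |t - t| = 0
      rw [sub_self, abs_zero]; exact min_eq_right (abs_nonneg _)
    rw [e1, e2]; norm_num
  have hcost0 : scost w (F w) = 0 := by
    refine le_antisymm ?_ (scost_nonneg _ _)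
    have := happ w
    rwa [hopt, mul_zero] at this
  have hdec := scost3 w i j k hij hik hjk (F w)
  rw [hwi, hwj, hwk] at hdec
  have n1 := fcost_nonneg (x i) (F w)
  have n2 := fcost_nonneg t (F w)
  have c1 : fcost (x i) (F w) = 0 := by linarith
  have c2 : fcost t (F w) = 0 := by linarith
  have hio : (F w).1 = x i ∨ (F w).2 = x i := by
    simp only [fcost] at c1
    rcases le_total |x i - (F w).1| |x i - (F w).2| with h | h
    · left
      rw [min_eq_left h] at c1
      have := abs_eq_zero.mp c1
      linarith
    · right
      rw [min_eq_right h] at c1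
      have := abs_eq_zero.mp c1
      linarith
  have hto : (F w).1 = t ∨ (F w).2 = t := by
    simp only [fcost] at c2
    rcases le_total |t - (F w).1| |t - (F w).2| with h | h
    · left
      rw [min_eq_left h] at c2
      have := abs_eq_zero.mp c2
      linarith
    · right
      rw [min_eq_right h] at c2
      have := abs_eq_zero.mp c2
      linarith
  have hP2t : (F w).2 = t := by
    rcases hto with h | h
    · rcases hio with h' | h'
      · rw [h] at h'; linarith
      · have := hord w; rw [h, h'] at this; linarith
    · exact h
  have hspk := hsp (Function.update x j t) k t
  rw [Function.update_of_ne (Ne.symm hjk), ← hw] at hspk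
  have hrhs : fcost (x k) (F w) ≤ x k - t := by
    refine le_trans (fcost_le_snd _ _) ?_
    rw [hP2t, abs_of_nonneg (by linarith)]
  by_contra hcon
  push_neg at hcon
  have hP := hord (Function.update x j t)
  have hb1 : x k - t < |x k - (F (Function.update x j t)).1| :=
    lt_of_lt_of_le (by linarith) (le_abs_self _)
  have hb2 : x k - t < |x k - (F (Function.update x j t)).2| :=
    lt_of_lt_of_le (by linarith) (le_abs_self _)
  have hlt : x k - t < fcost (x k) (F (Function.update x j t)) := lt_min hb1 hb2
  linarith [le_trans hspk hrhs]

/-- F₁ stays strictly below x j, via the approximation ratio. -/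
lemma F1low (F : (Fin 3 → ℝ) → ℝ × ℝ) (ρ : ℝ) (hρ : 1 ≤ ρ)
    (hord : Ordered F) (happ : ApproxRatio F ρ)
    (x : Fin 3 → ℝ) (i j k : Fin 3) (hij : i ≠ j) (hik : i ≠ k) (hjk : j ≠ k)
    (hws : WellSep ρ x i j k)
    (t : ℝ) (ht1 : x j ≤ t) (ht2 : t < x k) :
    (F (Function.update x j t)).1 < x j := by
  obtain ⟨hxij, hxjk, hsep⟩ := hws
  have hρ0 : (0:ℝ) ≤ ρ := by linarith
  set u := Function.update x j t with hu
  have hui : u i = x i := by rw [hu]; exact Function.update_of_ne hij t x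
  have huj : u j = t := by rw [hu]; exact Function.update_self j t x
  have huk : u k = x k := by rw [hu]; exact Function.update_of_ne (Ne.symm hjk) t x
  have hopt : optCost u ≤ x k - t := by
    refine le_trans (optCost_le u (x i, (t + x k)/2)) ?_
    rw [scost3 u i j k hij hik hjk, hui, huj, huk]
    have e1 : fcost (x i) (x i, (t + x k)/2) = 0 := by
      show min |x i - x i| |x i - (t + x k)/2| = 0
      rw [sub_self, abs_zero]; exact min_eq_left (abs_nonneg _)
    have e2 : fcost t (x i, (t + x k)/2) ≤ (x k - t)/2 := by
      refine le_trans (fcost_le_snd _ _) ?_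
      show |t - (t + x k)/2| ≤ _
      rw [abs_of_nonpos (by linarith)]; linarith
    have e3 : fcost (x k) (x i, (t + x k)/2) ≤ (x k - t)/2 := by
      refine le_trans (fcost_le_snd _ _) ?_
      show |x k - (t + x k)/2| ≤ _
      rw [abs_of_nonneg (by linarith)]; linarith
    linarith
  have hsc : scost u (F u) ≤ ρ * (x k - t) :=
    le_trans (happ u) (mul_le_mul_of_nonneg_left hopt hρ0)
  by_contra hcon
  push_neg at hcon
  have hP := hord u
  have hci : x j - x i ≤ fcost (x i) (F u) := by
    refine le_min ?_ ?_
    · calc x j - x i ≤ (F u).1 - x i := by linarith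
        _ ≤ |(F u).1 - x i| := le_abs_self _
        _ = |x i - (F u).1| := abs_sub_comm _ _
    · calc x j - x i ≤ (F u).2 - x i := by linarith
        _ ≤ |(F u).2 - x i| := le_abs_self _
        _ = |x i - (F u).2| := abs_sub_comm _ _
  have hd := scost3 u i j k hij hik hjk (F u)
  rw [hui, huj, huk] at hd
  have n1 := fcost_nonneg t (F u)
  have n2 := fcost_nonneg (x k) (F u)
  have hmono : ρ * (x k - t) ≤ ρ * (x k - x j) :=
    mul_le_mul_of_nonneg_left (by linarith) hρ0
  linarith

/-- the second facility sits exactly at distance D t to the right of t. -/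
lemma F2exact (F : (Fin 3 → ℝ) → ℝ × ℝ) (ρ : ℝ) (hρ : 1 ≤ ρ)
    (hord : Ordered F) (hsp : Strategyproof F) (happ : ApproxRatio F ρ)
    (x : Fin 3 → ℝ) (i j k : Fin 3) (hij : i ≠ j) (hik : i ≠ k) (hjk : j ≠ k)
    (hws : WellSep ρ x i j k) (hF : (F x).2 = x j)
    (t : ℝ) (ht1 : x j < t) (ht2 : t < x k) :
    (F (Function.update x j t)).2 = t + fcost t (F (Function.update x j t)) := by
  obtain ⟨hxij, hxjk, hsep⟩ := hws
  set u := Function.update x j t with hu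
  have h1' : fcost t (F u) ≤ t - x j := by
    have h := SPcore F hsp x j t (x j)
    rw [Function.update_eq_self] at h
    refine le_trans h (le_trans (fcost_le_snd _ _) ?_)
    rw [hF, abs_of_nonneg (by linarith)]
  have h2' : (F u).1 < x j :=
    F1low F ρ hρ hord happ x i j k hij hik hjk ⟨hxij, hxjk, hsep⟩ t (le_of_lt ht1) ht2
  have h3' : t ≤ (F u).2 :=
    F2high F ρ hρ hord hsp happ x i j k hij hik hjk t (by linarith) (le_of_lt ht2)
  have hfe : fcost t (F u) = min |t - (F u).1| |t - (F u).2| := rfl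
  rcases min_cases |t - (F u).1| |t - (F u).2| with ⟨hm, _⟩ | ⟨hm, _⟩
  · exfalso
    rw [hfe, hm, abs_of_nonneg (by linarith)] at h1'
    linarith
  · rw [hfe, hm, abs_of_nonpos (by linarith)]
    ring

/-- Proposition `b_pushes_c`: if `x` is `(i|j,k)`-well-separated and the
rightmost facility is at `x_j`, then moving agent `j` to any `x'_j` with
`x_j < x'_j < x_k` keeps the rightmost facility at agent `j`'s location. -/
theorem b_pushes_c (F : (Fin 3 → ℝ) → ℝ × ℝ) (ρ : ℝ) (hρ : 1 ≤ ρ)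
    (hord : Ordered F) (hsp : Strategyproof F) (happ : ApproxRatio F ρ)
    (x : Fin 3 → ℝ) (i j k : Fin 3)
    (hij : i ≠ j) (hik : i ≠ k) (hjk : j ≠ k)
    (hws : WellSep ρ x i j k) (hF : (F x).2 = x j)
    (x'j : ℝ) (h1 : x j < x'j) (h2 : x'j < x k) :
    (F (Function.update x j x'j)).2 = x'j := by
  obtain ⟨hxij, hxjk, hsep⟩ := hws
  -- the set of reports in [x j, x'j] on which agent j's cost vanishes
  set A := {s : ℝ | (x j ≤ s ∧ s ≤ x'j) ∧ fcost s (F (Function.update x j s)) = 0} with hA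
  have hD0 : fcost (x j) (F (Function.update x j (x j))) = 0 := by
    rw [Function.update_eq_self]
    refine le_antisymm (le_trans (fcost_le_snd _ _) ?_) (fcost_nonneg _ _)
    rw [hF, sub_self, abs_zero]
  have hxjA : x j ∈ A := ⟨⟨le_refl _, le_of_lt h1⟩, hD0⟩
  have hbdd : BddAbove A := ⟨x'j, fun s hs => hs.1.2⟩
  have hne : A.Nonempty := ⟨x j, hxjA⟩
  set a := sSup A with ha
  have haT : a ≤ x'j := csSup_le hne fun s hs => hs.1.2
  have hax : x j ≤ a := le_csSup hbdd hxjA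
  have hDa : fcost a (F (Function.update x j a)) = 0 := by
    by_contra h
    have hpos : 0 < fcost a (F (Function.update x j a)) :=
      (fcost_nonneg _ _).lt_of_ne (Ne.symm h)
    obtain ⟨s, hsA, hs⟩ := exists_lt_of_lt_csSup hne
      (show a - fcost a (F (Function.update x j a)) < sSup A by rw [← ha]; linarith)
    have hsa : s ≤ a := le_csSup hbdd hsA
    have e1 := SPcore F hsp x j a s
    have e2 := fcost_triangle a s (F (Function.update x j s))
    rw [hsA.2, abs_of_nonneg (by linarith)] at e2
    linarith
  have hF2a : (F (Function.update x j a)).2 = a := by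
    rcases eq_or_lt_of_le hax with heq | hlt
    · rw [← heq, Function.update_eq_self]; exact hF
    · have h := F2exact F ρ hρ hord hsp happ x i j k hij hik hjk
        ⟨hxij, hxjk, hsep⟩ hF a hlt (lt_of_le_of_lt haT h2)
      rw [hDa, add_zero] at h
      exact h
  rcases eq_or_lt_of_le haT with heq | hlt
  · rw [← heq]
    exact hF2a
  · exfalso
    set t := (a + x'j)/2 with htdef
    have hat : a < t := by rw [htdef]; linarith
    have htT : t < x'j := by rw [htdef]; linarith
    have hDt_le : fcost t (F (Function.update x j t)) ≤ t - a := by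
      refine le_trans (SPcore F hsp x j t a) (le_trans (fcost_le_snd _ _) ?_)
      rw [hF2a, abs_of_nonneg (by linarith)]
    have hDt_pos : 0 < fcost t (F (Function.update x j t)) := by
      rcases (fcost_nonneg t (F (Function.update x j t))).lt_or_eq with h | h
      · exact h
      · exfalso
        have htA : t ∈ A := ⟨⟨by linarith, le_of_lt htT⟩, h.symm⟩
        have := le_csSup hbdd htA
        rw [← ha] at this
        linarith
    have hu := F2exact F ρ hρ hord hsp happ x i j k hij hik hjk
      ⟨hxij, hxjk, hsep⟩ hF t (by linarith) (by linarith)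
    set d := fcost t (F (Function.update x j t)) with hd
    have hdle : t + d ≤ x'j := by rw [htdef] at hDt_le ⊢; linarith
    have hDu : fcost (t + d) (F (Function.update x j (t + d))) = 0 := by
      refine le_antisymm (le_trans (SPcore F hsp x j (t + d) t)
        (le_trans (fcost_le_snd _ _) ?_)) (fcost_nonneg _ _)
      rw [hu, sub_self, abs_zero]
    have huA : (t + d) ∈ A := ⟨⟨by linarith, hdle⟩, hDu⟩
    have := le_csSup hbdd huA
    rw [← ha] at this
    linarith
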